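/- Let u be an infinite word over a finite alphabet A with letter frequencies f = (f_i). Then u is balanced if and only if its discrepancy Δ(u) = limsup over i ∈ A and n ∈ ℕ of ||u_0⋯u_{n-1}|_i − n f_i| is finite. Moreover, quantitatively, Δ(u) ≤ B(u) and B(u) ≤ 4Δ(u) when both are finite, where B(u) is the least C such that u is C-balanced. -/

import Mathlib

open Filter Topology ENNReal

/-- The factor of the infinite word `u` of length `n` starting at position `k`. -/
def factorAt {A : Type*} (u : ℕ → A) (k n : ℕ) : List A :=
  (List.range n).map (fun j => u (k + j))

/-- `w` is a factor of the infinite word `u`. -/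
def IsFactor {A : Type*} (u : ℕ → A) (w : List A) : Prop :=
  ∃ k, w = factorAt u k w.length

/-- The discrepancy `Δ(u)` of the word `u` with respect to the letter frequency vector `f`:
the supremum over letters `i` and `n ∈ ℕ` of `||u_0⋯u_{n-1}|_i − n f_i|` (in `ℝ≥0∞`). -/
noncomputable def discrepancy {A : Type*} [Fintype A] [DecidableEq A]
    (u : ℕ → A) (f : A → ℝ) : ℝ≥0∞ :=
  ⨆ i : A, ⨆ n : ℕ, ENNReal.ofReal |((factorAt u 0 n).count i : ℝ) - n * f i|

/-- The balancedness constant `B(u)`: the least `C ∈ ℝ≥0∞` such that `u` is `C`-balanced. -/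
noncomputable def balanceConst {A : Type*} [Fintype A] [DecidableEq A]
    (u : ℕ → A) : ℝ≥0∞ :=
  sInf {C : ℝ≥0∞ | ∀ v w : List A, IsFactor u v → IsFactor u w → v.length = w.length →
    ∀ i : A, ENNReal.ofReal |(v.count i : ℝ) - (w.count i : ℝ)| ≤ C}

lemma factorAt_length {A : Type*} (u : ℕ → A) (k n : ℕ) : (factorAt u k n).length = n := by
  simp [factorAt]

lemma isFactor_factorAt {A : Type*} (u : ℕ → A) (k n : ℕ) : IsFactor u (factorAt u k n) :=
  ⟨k, by rw [factorAt_length]⟩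

lemma factorAt_append {A : Type*} (u : ℕ → A) (k n : ℕ) :
    factorAt u 0 (k + n) = factorAt u 0 k ++ factorAt u k n := by
  simp [factorAt, List.range_add, List.map_map, Function.comp]

lemma count_factorAt {A : Type*} [DecidableEq A] (u : ℕ → A) (k n : ℕ) (i : A) :
    ((factorAt u k n).count i : ℝ)
      = ((factorAt u 0 (k + n)).count i : ℝ) - ((factorAt u 0 k).count i : ℝ) := by
  rw [factorAt_append u k n, List.count_append]
  push_cast
  ring

/-- Core lemma: a real balance bound gives a discrepancy bound. -/
lemma abs_sub_mul_le_of_balanced {A : Type*} [Fintype A] [DecidableEq A]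
    (u : ℕ → A) (f : A → ℝ)
    (hfreq : ∀ i : A,
      Tendsto (fun n => ((factorAt u 0 n).count i : ℝ) / n) atTop (𝓝 (f i)))
    (C : ℝ) (hC : 0 ≤ C)
    (hbal : ∀ v w : List A, IsFactor u v → IsFactor u w → v.length = w.length →
        ∀ i : A, |(v.count i : ℝ) - (w.count i : ℝ)| ≤ C)
    (i : A) (n : ℕ) : |((factorAt u 0 n).count i : ℝ) - n * f i| ≤ C := by
  rcases Nat.eq_zero_or_pos n with rfl | hn
  · simpa [factorAt] using hC
  set c : ℕ → ℝ := fun m => ((factorAt u 0 m).count i : ℝ) with hc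
  have hnR : (0 : ℝ) < n := by exact_mod_cast hn
  have step : ∀ k : ℕ, |c (k * n) - k * c n| ≤ k * C := by
    intro k
    induction k with
    | zero => simp [c, factorAt]
    | succ k ih =>
      have h1 : c ((k + 1) * n) = c (k * n) + ((factorAt u (k * n) n).count i : ℝ) := by
        have hkn : (k + 1) * n = k * n + n := by ring
        rw [hc]
        simp only [hkn, count_factorAt u (k * n) n i]
        ring
      have h2 : |((factorAt u (k * n) n).count i : ℝ) - c n| ≤ C :=
        hbal _ _ (isFactor_factorAt u (k * n) n) (isFactor_factorAt u 0 n)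
          (by rw [factorAt_length, factorAt_length]) i
      have h3 : c ((k + 1) * n) - (k + 1 : ℕ) * c n
          = (c (k * n) - k * c n) + (((factorAt u (k * n) n).count i : ℝ) - c n) := by
        rw [h1]; push_cast; ring
      calc |c ((k + 1) * n) - (k + 1 : ℕ) * c n|
          ≤ |c (k * n) - k * c n| + |((factorAt u (k * n) n).count i : ℝ) - c n| := by
            rw [h3]; exact abs_add_le _ _
        _ ≤ k * C + C := add_le_add ih h2
        _ = (k + 1 : ℕ) * C := by push_cast; ring
  -- take limits
  have hmul : Tendsto (fun k : ℕ => k * n) atTop atTop :=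
    tendsto_atTop_atTop.mpr fun b => ⟨b, fun a ha => le_trans ha (Nat.le_mul_of_pos_right a hn)⟩
  have hlim : Tendsto (fun k : ℕ => c (k * n) / ((k * n : ℕ) : ℝ)) atTop (𝓝 (f i)) :=
    (hfreq i).comp hmul
  have hineq : ∀ᶠ k : ℕ in atTop, |c (k * n) / ((k * n : ℕ) : ℝ) - c n / n| ≤ C / n := by
    filter_upwards [eventually_ge_atTop 1] with k hk
    have hkR : (0 : ℝ) < k := by exact_mod_cast hk
    have hknR : (0 : ℝ) < (k * n : ℕ) := by positivity
    have heq : c (k * n) / ((k * n : ℕ) : ℝ) - c n / n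
        = (c (k * n) - k * c n) / ((k * n : ℕ) : ℝ) := by
      push_cast
      field_simp
    rw [heq, abs_div, abs_of_pos hknR, div_le_div_iff₀ hknR hnR]
    calc |c (k * n) - k * c n| * n ≤ (k * C) * n :=
          mul_le_mul_of_nonneg_right (step k) (le_of_lt hnR)
      _ = C * ((k * n : ℕ) : ℝ) := by push_cast; ring
  have hlim2 : Tendsto (fun k : ℕ => |c (k * n) / ((k * n : ℕ) : ℝ) - c n / n|) atTop
      (𝓝 |f i - c n / n|) := (hlim.sub tendsto_const_nhds).abs
  have hfinal : |f i - c n / n| ≤ C / n := le_of_tendsto hlim2 hineq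
  have heq2 : |c n - n * f i| = n * |f i - c n / n| := by
    rw [abs_sub_comm, ← abs_of_pos hnR, ← abs_mul]
    congr 1
    field_simp
    rw [abs_of_pos hnR]
    ring
  rw [heq2]
  calc n * |f i - c n / n| ≤ n * (C / n) :=
        mul_le_mul_of_nonneg_left hfinal (le_of_lt hnR)
    _ = C := by field_simp

/-- A discrepancy bound gives a (4×) balance bound. -/
lemma balanced_of_disc {A : Type*} [Fintype A] [DecidableEq A]
    (u : ℕ → A) (f : A → ℝ) (D : ℝ)
    (hD : ∀ i : A, ∀ n : ℕ, |((factorAt u 0 n).count i : ℝ) - n * f i| ≤ D) :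
    ∀ v w : List A, IsFactor u v → IsFactor u w → v.length = w.length →
      ∀ i : A, |(v.count i : ℝ) - (w.count i : ℝ)| ≤ 4 * D := by
  have key : ∀ k n : ℕ, ∀ i : A, |((factorAt u k n).count i : ℝ) - n * f i| ≤ 2 * D := by
    intro k n i
    have h1 := hD i (k + n)
    have h2 := hD i k
    rw [Nat.cast_add] at h1
    have heq : ((factorAt u k n).count i : ℝ) - n * f i
        = (((factorAt u 0 (k + n)).count i : ℝ) - (k + n) * f i)
          - (((factorAt u 0 k).count i : ℝ) - k * f i) := by
      rw [count_factorAt u k n i]; push_cast; ring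
    rw [heq]
    calc |(((factorAt u 0 (k + n)).count i : ℝ) - (k + n) * f i)
          - (((factorAt u 0 k).count i : ℝ) - k * f i)|
        ≤ |((factorAt u 0 (k + n)).count i : ℝ) - (k + n) * f i|
          + |((factorAt u 0 k).count i : ℝ) - k * f i| := abs_sub _ _
      _ ≤ D + D := add_le_add h1 h2
      _ = 2 * D := by ring
  rintro v w ⟨k, hk⟩ ⟨l, hl⟩ hlen i
  have hv := key k v.length i
  have hw := key l w.length i
  rw [← hk] at hv
  rw [← hl] at hw
  rw [hlen] at hv
  calc |(v.count i : ℝ) - (w.count i : ℝ)|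
      = |((v.count i : ℝ) - w.length * f i) - ((w.count i : ℝ) - w.length * f i)| := by ring_nf
    _ ≤ |(v.count i : ℝ) - w.length * f i| + |(w.count i : ℝ) - w.length * f i| := abs_sub _ _
    _ ≤ 2 * D + 2 * D := add_le_add hv hw
    _ = 4 * D := by ring

/-- For an infinite word `u` with letter frequencies `f`: `u` is balanced iff its
discrepancy `Δ(u)` is finite; moreover `Δ(u) ≤ B(u)` and `B(u) ≤ 4 Δ(u)`. -/
theorem balanced_iff_finite_discrepancy {A : Type*} [Fintype A] [DecidableEq A]
    (u : ℕ → A) (f : A → ℝ)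
    (hfreq : ∀ i : A,
      Tendsto (fun n => ((factorAt u 0 n).count i : ℝ) / n) atTop (𝓝 (f i))) :
    ((∃ C : ℝ, ∀ v w : List A, IsFactor u v → IsFactor u w → v.length = w.length →
        ∀ i : A, |(v.count i : ℝ) - (w.count i : ℝ)| ≤ C) ↔
      discrepancy u f ≠ ⊤) ∧
    discrepancy u f ≤ balanceConst u ∧
    balanceConst u ≤ 4 * discrepancy u f := by
  -- key extraction: if discrepancy is finite, we have a uniform real bound
  have hdisc_bound : discrepancy u f ≠ ⊤ →
      ∀ i : A, ∀ n : ℕ, |((factorAt u 0 n).count i : ℝ) - n * f i| ≤ (discrepancy u f).toReal := by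
    intro htop i n
    have : ENNReal.ofReal |((factorAt u 0 n).count i : ℝ) - n * f i| ≤ discrepancy u f :=
      le_trans (le_iSup (fun m => ENNReal.ofReal |((factorAt u 0 m).count i : ℝ) - m * f i|) n)
        (le_iSup (fun j : A => ⨆ m : ℕ,
          ENNReal.ofReal |((factorAt u 0 m).count j : ℝ) - m * f j|) i)
    exact (ENNReal.ofReal_le_iff_le_toReal htop).mp this
  refine ⟨⟨?_, ?_⟩, ?_, ?_⟩
  · -- balanced → finite discrepancy
    rintro ⟨C, hC⟩
    have hbound := abs_sub_mul_le_of_balanced u f hfreq (max C 0) (le_max_right _ _)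
      (fun v w hv hw hl i => le_trans (hC v w hv hw hl i) (le_max_left _ _))
    have : discrepancy u f ≤ ENNReal.ofReal (max C 0) :=
      iSup_le fun i => iSup_le fun n => ENNReal.ofReal_le_ofReal (hbound i n)
    exact ne_top_of_le_ne_top ENNReal.ofReal_ne_top this
  · -- finite discrepancy → balanced
    intro htop
    exact ⟨4 * (discrepancy u f).toReal, balanced_of_disc u f _ (hdisc_bound htop)⟩
  · -- Δ ≤ B
    refine le_sInf fun C hC => ?_
    rcases eq_or_ne C ⊤ with rfl | hCtop
    · exact le_top
    · have hreal : ∀ v w : List A, IsFactor u v → IsFactor u w → v.length = w.length →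
          ∀ i : A, |(v.count i : ℝ) - (w.count i : ℝ)| ≤ C.toReal := fun v w hv hw hl i =>
        (ENNReal.ofReal_le_iff_le_toReal hCtop).mp (hC v w hv hw hl i)
      have hbound := abs_sub_mul_le_of_balanced u f hfreq C.toReal ENNReal.toReal_nonneg hreal
      calc discrepancy u f ≤ ENNReal.ofReal C.toReal :=
            iSup_le fun i => iSup_le fun n => ENNReal.ofReal_le_ofReal (hbound i n)
        _ = C := ENNReal.ofReal_toReal hCtop
  · -- B ≤ 4Δ
    rcases eq_or_ne (discrepancy u f) ⊤ with htop | htop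
    · rw [htop]
      simp
    · have hbal := balanced_of_disc u f _ (hdisc_bound htop)
      have hmem : ENNReal.ofReal (4 * (discrepancy u f).toReal) ∈
          {C : ℝ≥0∞ | ∀ v w : List A, IsFactor u v → IsFactor u w → v.length = w.length →
            ∀ i : A, ENNReal.ofReal |(v.count i : ℝ) - (w.count i : ℝ)| ≤ C} :=
        fun v w hv hw hl i => ENNReal.ofReal_le_ofReal (hbal v w hv hw hl i)
      calc balanceConst u ≤ ENNReal.ofReal (4 * (discrepancy u f).toReal) := sInf_le hmem
        _ = 4 * discrepancy u f := by
            rw [ENNReal.ofReal_mul (by norm_num), ENNReal.ofReal_toReal htop]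
            norm_num
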